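/- Let F be a finite field of characteristic 3, G = T_{3m} with m = 3k+1, and H = ⟨x⟩. If α ∈ Δ(G,H) commutes with every element of Δ(G,H), then α commutes with every element of FG; that is, Z(Δ(G,H)) ⊆ Z(FG). -/

import Mathlib

/-- Relations of the presentation `T_{3m} = ⟨x, y | x^m = y^3 = 1, y⁻¹xy = x^t⟩`. -/
def T3mRels (m t : ℕ) : Set (FreeGroup (Fin 2)) :=
  {FreeGroup.of 0 ^ m, FreeGroup.of 1 ^ 3,
   (FreeGroup.of 1)⁻¹ * FreeGroup.of 0 * FreeGroup.of 1 * (FreeGroup.of 0 ^ t)⁻¹}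

/-- The group `T_{3m}` given by the presentation `⟨x, y | x^m = y^3 = 1, y⁻¹xy = x^t⟩`. -/
abbrev T3m (m t : ℕ) : Type := PresentedGroup (T3mRels m t)

/-- The generator `x` of `T_{3m}`. -/
def xg (m t : ℕ) : T3m m t := PresentedGroup.of 0

/-- The generator `y` of `T_{3m}`. -/
def yg (m t : ℕ) : T3m m t := PresentedGroup.of 1
/-- For a finite field `F` of characteristic 3, `G = T_{3m}` and `H = ⟨x⟩`: any element of
`Δ(G,H)` commuting with all of `Δ(G,H)` commutes with all of `FG`, i.e.
`Z(Δ(G,H)) ⊆ Z(FG)`. -/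
theorem center_aug_subset_center (F : Type*) [Field F] [Fintype F] [CharP F 3] (m t k : ℕ)
    (ht1 : 1 ≤ t) (hm : m = 3 * k + 1) (ht : t ^ 3 % m = 1 % m)
    (hgcd : Nat.gcd m (t - 1) = 1) [hN : (Subgroup.zpowers (xg m t)).Normal] :
    ∀ α ∈ RingHom.ker (MonoidAlgebra.mapDomainRingHom F
        (QuotientGroup.mk' (Subgroup.zpowers (xg m t)))),
      (∀ β ∈ RingHom.ker (MonoidAlgebra.mapDomainRingHom F
          (QuotientGroup.mk' (Subgroup.zpowers (xg m t)))), α * β = β * α) →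
      ∀ γ : MonoidAlgebra F (T3m m t), α * γ = γ * α := by
  classical
  intro α hα hcomm γ
  set x : T3m m t := xg m t with hxdef
  set H : Subgroup (T3m m t) := Subgroup.zpowers x with hHdef
  set π : T3m m t →* T3m m t ⧸ H := QuotientGroup.mk' H with hπdef
  set Φ := MonoidAlgebra.mapDomainRingHom F π with hΦdef
  -- `x ^ m = 1`
  have hx1 : x ^ m = 1 := by
    have hmem : (FreeGroup.of 0 ^ m : FreeGroup (Fin 2)) ∈
        Subgroup.normalClosure (T3mRels m t) :=
      Subgroup.subset_normalClosure (by left; rfl)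
    have h1 : PresentedGroup.mk (T3mRels m t) (FreeGroup.of 0 ^ m) = 1 :=
      (QuotientGroup.eq_one_iff _).mpr hmem
    rw [map_pow] at h1
    exact h1
  have hmpos : 0 < m := by omega
  have hfin : IsOfFinOrder x := isOfFinOrder_iff_pow_eq_one.mpr ⟨m, hmpos, hx1⟩
  set d : ℕ := orderOf x with hddef
  have hd0 : 0 < d := hfin.orderOf_pos
  have hdm : d ∣ m := orderOf_dvd_of_pow_eq_one hx1
  have hdF : (d : F) ≠ 0 := by
    intro h
    have h3 : (3 : ℕ) ∣ d := (CharP.cast_eq_zero_iff F 3 d).mp h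
    have : (3 : ℕ) ∣ m := h3.trans hdm
    omega
  -- the finite set of elements of H
  set Hfin : Finset (T3m m t) := (Finset.range d).image (x ^ ·) with hHfin
  have hmemH : ∀ c : T3m m t, c ∈ Hfin ↔ c ∈ H := by
    intro c
    rw [hHfin]
    constructor
    · intro hc
      rcases Finset.mem_image.mp hc with ⟨i, _, rfl⟩
      exact Subgroup.pow_mem H (Subgroup.mem_zpowers x) i
    · intro hc
      rcases Subgroup.mem_zpowers_iff.mp hc with ⟨n, rfl⟩
      refine Finset.mem_image.mpr ⟨(n % d).toNat, Finset.mem_range.mpr ?_, ?_⟩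
      · have h1 : n % (d : ℤ) < d := Int.emod_lt_of_pos n (by exact_mod_cast hd0)
        omega
      · have h0 : 0 ≤ n % (d : ℤ) := Int.emod_nonneg n (by exact_mod_cast hd0.ne')
        have h2 : x ^ (((n % (d : ℤ)).toNat : ℤ)) = x ^ n := by
          rw [Int.toNat_of_nonneg h0, zpow_mod_orderOf]
        rw [← zpow_natCast, h2]
  -- the "sum over H" element
  set hhat : MonoidAlgebra F (T3m m t) := ∑ c ∈ Hfin, MonoidAlgebra.single c (1 : F)
    with hhatdef
  -- hhat is central
  have hcen : ∀ δ : MonoidAlgebra F (T3m m t), hhat * δ = δ * hhat := by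
    intro δ
    induction δ using MonoidAlgebra.induction_linear with
    | zero => simp
    | add f g hf hg => rw [mul_add, add_mul, hf, hg]
    | single a b =>
      rw [hhatdef, Finset.sum_mul, Finset.mul_sum]
      refine Finset.sum_nbij' (fun c => a⁻¹ * c * a) (fun c => a * c * a⁻¹) ?_ ?_ ?_ ?_ ?_
      · intro c hc
        have h1 : a⁻¹ * c * a⁻¹⁻¹ ∈ H := hN.conj_mem c ((hmemH c).mp hc) a⁻¹
        refine (hmemH _).mpr ?_
        simpa using h1
      · intro c hc
        exact (hmemH _).mpr (hN.conj_mem c ((hmemH c).mp hc) a)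
      · intro c _; group
      · intro c _; group
      · intro c _
        rw [MonoidAlgebra.single_mul_single, MonoidAlgebra.single_mul_single]
        congr 1
        · group
        · rw [one_mul, mul_one]
  -- α annihilates hhat
  have hα0 : Finsupp.mapDomain π α.coeff = 0 := by
    have h1 := RingHom.mem_ker.mp hα
    rw [hΦdef] at h1
    exact congrArg MonoidAlgebra.coeff h1
  have hann : α * hhat = 0 := by
    ext g
    have e1 : (α * hhat).coeff g = ∑ c ∈ Hfin, α.coeff (g * c⁻¹) := by
      rw [hhatdef, Finset.mul_sum, MonoidAlgebra.coeff_sum, Finset.sum_apply']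
      exact Finset.sum_congr rfl fun c _ => by
        rw [MonoidAlgebra.coeff_mul_single_apply, mul_one]
    have e2 : ∑ c ∈ Hfin, α.coeff (g * c⁻¹) = ∑ c ∈ Hfin, α.coeff (g * c) := by
      refine Finset.sum_nbij' (fun c => c⁻¹) (fun c => c⁻¹)
        (fun c hc => (hmemH _).mpr (H.inv_mem ((hmemH c).mp hc)))
        (fun c hc => (hmemH _).mpr (H.inv_mem ((hmemH c).mp hc)))
        (fun c _ => inv_inv c) (fun c _ => inv_inv c) (fun c _ => rfl)
    have e3 : ∑ c ∈ Hfin, α.coeff (g * c) = ∑ a ∈ Hfin.image (g * ·), α.coeff a :=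
      (Finset.sum_image (fun a _ b _ h => mul_left_cancel h)).symm
    have e5 : ∑ a ∈ α.coeff.support.filter (fun a => π a = π g), α.coeff a = 0 := by
      have h := DFunLike.congr_fun hα0 (π g)
      rw [Finsupp.mapDomain, Finsupp.sum_apply, Finsupp.coe_zero, Pi.zero_apply,
        Finsupp.sum] at h
      have h2 : ∑ a ∈ α.coeff.support, (if π a = π g then α.coeff a else 0)
          = ∑ a ∈ α.coeff.support, (Finsupp.single (π a) (α.coeff a)) (π g) :=
        Finset.sum_congr rfl fun a _ => by rw [Finsupp.single_apply]
      rw [Finset.sum_filter, h2]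
      exact h
    have e4 : ∑ a ∈ Hfin.image (g * ·), α.coeff a
        = ∑ a ∈ α.coeff.support.filter (fun a => π a = π g), α.coeff a := by
      refine (Finset.sum_subset ?_ ?_).symm
      · intro a ha
        rcases Finset.mem_filter.mp ha with ⟨_, hpa⟩
        have hga : g⁻¹ * a ∈ H := by
          have h1 : ((g : T3m m t ⧸ H)) = a := hpa.symm
          exact QuotientGroup.eq.mp h1
        refine Finset.mem_image.mpr ⟨g⁻¹ * a, (hmemH _).mpr hga, by group⟩
      · intro a ha hna
        rcases Finset.mem_image.mp ha with ⟨c, hc, rfl⟩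
        have hpa : π (g * c) = π g := by
          show ((g * c : T3m m t) : T3m m t ⧸ H) = g
          exact (QuotientGroup.eq.mpr (by simpa using ((hmemH c).mp hc))).symm
        have hs : g * c ∉ α.coeff.support := fun hs => hna (Finset.mem_filter.mpr ⟨hs, hpa⟩)
        exact Finsupp.notMem_support_iff.mp hs
    rw [e1, e2, e3, e4, e5]
    exact Finsupp.zero_apply.symm
  have hann' : hhat * α = 0 := by rw [hcen α]; exact hann
  -- the image of hhat under Φ is d • 1
  have hcard : Hfin.card = d := by
    rw [hHfin, Finset.card_image_of_injOn, Finset.card_range]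
    intro i hi j hj hij
    rw [Finset.coe_range, Set.mem_Iio] at hi hj
    have h1 := pow_inj_mod.mp hij
    rwa [Nat.mod_eq_of_lt hi, Nat.mod_eq_of_lt hj] at h1
  have hmap : Φ hhat = MonoidAlgebra.single (1 : T3m m t ⧸ H) (d : F) := by
    rw [hhatdef, map_sum]
    have h1 : ∀ c ∈ Hfin, Φ (MonoidAlgebra.single c (1 : F))
        = MonoidAlgebra.single (1 : T3m m t ⧸ H) (1 : F) := by
      intro c hc
      have hc1 : π c = 1 := (QuotientGroup.eq_one_iff c).mpr ((hmemH c).mp hc)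
      rw [hΦdef]
      show MonoidAlgebra.mapDomain π (MonoidAlgebra.single c (1 : F)) = _
      rw [MonoidAlgebra.mapDomain_single, hc1]
    rw [Finset.sum_congr rfl h1, Finset.sum_const, hcard, MonoidAlgebra.smul_single,
      nsmul_eq_mul, mul_one]
  -- scalar action commutes with Φ
  have hΦsmul : ∀ (c : F) (v : MonoidAlgebra F (T3m m t)), Φ (c • v) = c • Φ v := by
    intro c v
    rw [hΦdef]
    show MonoidAlgebra.mapDomain π (c • v) = c • MonoidAlgebra.mapDomain π v
    exact congrArg MonoidAlgebra.ofCoeff (Finsupp.mapDomain_smul c v.coeff)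
  -- multiplying by single 1 (d : F) is scalar multiplication
  have hsm : ∀ v : MonoidAlgebra F (T3m m t ⧸ H),
      v * MonoidAlgebra.single (1 : T3m m t ⧸ H) (d : F) = (d : F) • v := by
    intro v
    ext y
    rw [MonoidAlgebra.coeff_mul_single_apply, MonoidAlgebra.coeff_smul_apply, inv_one, mul_one, smul_eq_mul,
      mul_comm]
  -- the decomposition of γ
  set u : F := (d : F)⁻¹ with hu
  set β : MonoidAlgebra F (T3m m t) := γ - u • (γ * hhat) with hβdef
  have hβker : β ∈ RingHom.ker Φ := by
    rw [RingHom.mem_ker, hβdef, map_sub, hΦsmul, map_mul, hmap, hsm, smul_smul, hu,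
      inv_mul_cancel₀ hdF, one_smul, sub_self]
  have hβγ : β + u • (γ * hhat) = γ := by rw [hβdef, sub_add_cancel]
  calc α * γ = α * (β + u • (γ * hhat)) := by rw [hβγ]
    _ = α * β + u • (α * (γ * hhat)) := by rw [mul_add, mul_smul_comm]
    _ = α * β := by
        rw [← hcen γ, ← mul_assoc, hann, zero_mul, smul_zero, add_zero]
    _ = β * α := hcomm β hβker
    _ = β * α + u • ((γ * hhat) * α) := by
        rw [mul_assoc, hann', mul_zero, smul_zero, add_zero]
    _ = (β + u • (γ * hhat)) * α := by rw [add_mul, smul_mul_assoc]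
    _ = γ * α := by rw [hβγ]
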